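/- Every SJSK-matrix A is a τ^<-matrix: l(A) > 0, every principal submatrix of A has a real eigenvalue, and l(A(α)) < l(A(β)) < ∞ whenever ∅ ≠ β ⊊ α ⊆ {1,…,n}. -/

import Mathlib

open Matrix

/-- The minor of the matrix `A` on the row set `α` and the column set `β`
(rows and columns taken in increasing order); junk value `0` if the
cardinalities of `α` and `β` differ. -/
noncomputable def minorOn {n : ℕ} (A : Matrix (Fin n) (Fin n) ℝ)
    (α β : Finset (Fin n)) : ℝ :=
  if h : β.card = α.card then
    (A.submatrix (⇑(α.orderEmbOfFin rfl)) (⇑(β.orderEmbOfFin h))).det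
  else 0

/-- The principal submatrix `A(α)` of `A` on the index set `α`. -/
def psub {n : ℕ} (A : Matrix (Fin n) (Fin n) ℝ) (α : Finset (Fin n)) :
    Matrix (Fin α.card) (Fin α.card) ℝ :=
  A.submatrix (⇑(α.orderEmbOfFin rfl)) (⇑(α.orderEmbOfFin rfl))

/-- `A` is a Kotelyansky (K) matrix: all principal minors are positive and all
almost principal minors are nonnegative. -/
def IsK {n : ℕ} (A : Matrix (Fin n) (Fin n) ℝ) : Prop :=
  (∀ α : Finset (Fin n), α.Nonempty → 0 < minorOn A α α) ∧
  (∀ (α : Finset (Fin n)) (r s : Fin n), r ∈ α → s ∈ α → r ≠ s →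
    0 ≤ minorOn A (α.erase r) (α.erase s))

/-- `A` is a strictly Kotelyansky (SK) matrix: all principal minors and all
almost principal minors are positive. -/
def IsSK {n : ℕ} (A : Matrix (Fin n) (Fin n) ℝ) : Prop :=
  (∀ α : Finset (Fin n), α.Nonempty → 0 < minorOn A α α) ∧
  (∀ (α : Finset (Fin n)) (r s : Fin n), r ∈ α → s ∈ α → r ≠ s →
    0 < minorOn A (α.erase r) (α.erase s))

/-- The `j`-th compound matrix of `A`: the matrix of all `j×j` minors of `A`,
indexed by the `j`-element subsets of the index set. -/
noncomputable def compound {m : ℕ} (A : Matrix (Fin m) (Fin m) ℝ) (j : ℕ) :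
    Matrix {s : Finset (Fin m) // s.card = j} {s : Finset (Fin m) // s.card = j} ℝ :=
  fun s t => minorOn A s.1 t.1

/-- `A` is J-sign-symmetric for the subset `J` of its index set. -/
def IsJS {ι : Type*} (J : Set ι) (A : Matrix ι ι ℝ) : Prop :=
  (∀ i j, ((i ∈ J ∧ j ∈ J) ∨ (i ∉ J ∧ j ∉ J)) → 0 ≤ A i j) ∧
  (∀ i j, ((i ∈ J ∧ j ∉ J) ∨ (i ∉ J ∧ j ∈ J)) → A i j ≤ 0)

/-- `A` is strictly J-sign-symmetric: J-sign-symmetric with no zero entries. -/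
def IsSJS {ι : Type*} (J : Set ι) (A : Matrix ι ι ℝ) : Prop :=
  IsJS J A ∧ ∀ i j, A i j ≠ 0

/-- `A` is strictly totally J-sign-symmetric: every compound matrix `A^(j)`,
`1 ≤ j ≤ n`, is strictly J-sign-symmetric for some subset of its index set. -/
def IsSTJS {n : ℕ} (A : Matrix (Fin n) (Fin n) ℝ) : Prop :=
  ∀ j, 1 ≤ j → j ≤ n →
    ∃ J : Set {s : Finset (Fin n) // s.card = j}, IsSJS J (compound A j)

/-- `A` is J-sign-symmetric Kotelyansky (JSK). -/
def IsJSK {n : ℕ} (A : Matrix (Fin n) (Fin n) ℝ) : Prop :=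
  (∀ α : Finset (Fin n), α.Nonempty → 0 < minorOn A α α) ∧
  ∀ α : Finset (Fin n), 2 ≤ α.card →
    ∃ J : Set {s : Finset (Fin α.card) // s.card = α.card - 1},
      IsJS J (compound (psub A α) (α.card - 1))

/-- `A` is strictly J-sign-symmetric Kotelyansky (SJSK). -/
def IsSJSK {n : ℕ} (A : Matrix (Fin n) (Fin n) ℝ) : Prop :=
  0 < A.det ∧
  ∀ α : Finset (Fin n), 2 ≤ α.card →
    ∃ J : Set {s : Finset (Fin α.card) // s.card = α.card - 1},
      IsSJS J (compound (psub A α) (α.card - 1))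

/-- `l(B)`: the smallest real eigenvalue of `B`, or `∞` (`⊤` in `EReal`) if `B`
has no real eigenvalues. -/
noncomputable def lval {m : ℕ} (B : Matrix (Fin m) (Fin m) ℝ) : EReal :=
  sInf (insert (⊤ : EReal) ((fun t : ℝ => (t : EReal)) '' {t : ℝ | B.charpoly.IsRoot t}))

section Comb

variable {N k : ℕ} (A : Matrix (Fin N) (Fin N) ℝ)

lemma finCongr_strictMono {a b : ℕ} (h : a = b) : StrictMono (finCongr h) :=
  fun _ _ hx => hx

lemma minorOn_eq_det {s t : Finset (Fin N)} {f g : Fin k → Fin N}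
    (hf : StrictMono f) (hg : StrictMono g)
    (hfs : Finset.image f Finset.univ = s) (hgt : Finset.image g Finset.univ = t) :
    minorOn A s t = (A.submatrix f g).det := by
  have hsc : s.card = k := by
    rw [← hfs, Finset.card_image_of_injective _ hf.injective, Finset.card_univ,
      Fintype.card_fin]
  have htc : t.card = k := by
    rw [← hgt, Finset.card_image_of_injective _ hg.injective, Finset.card_univ,
      Fintype.card_fin]
  have hts : t.card = s.card := by rw [hsc, htc]
  rw [minorOn, dif_pos hts]
  have hc : StrictMono (finCongr hsc) := finCongr_strictMono hsc
  have h1 : ⇑(s.orderEmbOfFin rfl) = f ∘ (finCongr hsc) := by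
    refine (Finset.orderEmbOfFin_unique rfl ?_ (hf.comp hc)).symm
    intro x
    have : f (finCongr hsc x) ∈ Finset.image f Finset.univ :=
      Finset.mem_image_of_mem _ (Finset.mem_univ _)
    rwa [hfs] at this
  have h2 : ⇑(t.orderEmbOfFin hts) = g ∘ (finCongr hsc) := by
    refine (Finset.orderEmbOfFin_unique hts ?_ (hg.comp hc)).symm
    intro x
    have : g (finCongr hsc x) ∈ Finset.image g Finset.univ :=
      Finset.mem_image_of_mem _ (Finset.mem_univ _)
    rwa [hgt] at this
  rw [h1, h2]
  rw [show A.submatrix (f ∘ ⇑(finCongr hsc)) (g ∘ ⇑(finCongr hsc))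
      = (A.submatrix f g).submatrix (finCongr hsc) (finCongr hsc) from rfl]
  exact det_submatrix_equiv_self _ _

lemma minorOn_univ : minorOn A Finset.univ Finset.univ = A.det := by
  rw [minorOn_eq_det A (f := id) (g := id) strictMono_id strictMono_id
    Finset.image_id Finset.image_id]
  simp

lemma minorOn_self (β : Finset (Fin N)) : minorOn A β β = (psub A β).det := by
  rw [minorOn, dif_pos rfl]; rfl

lemma orderEmbOfFin_image (s : Finset (Fin N)) (h : s.card = k) :
    Finset.image (⇑(s.orderEmbOfFin h)) Finset.univ = s := by
  ext x
  simp only [Finset.mem_image, Finset.mem_univ, true_and]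
  constructor
  · rintro ⟨i, rfl⟩; exact Finset.orderEmbOfFin_mem s h i
  · intro hx
    have := Finset.range_orderEmbOfFin s h
    have : x ∈ Set.range (⇑(s.orderEmbOfFin h)) := by rw [this]; exact hx
    obtain ⟨i, hi⟩ := this
    exact ⟨i, hi⟩

lemma minorOn_submatrix {e : Fin k → Fin N} (he : StrictMono e)
    (u v : Finset (Fin k)) (hcard : v.card = u.card) :
    minorOn (A.submatrix e e) u v = minorOn A (u.image e) (v.image e) := by
  have h1 : minorOn (A.submatrix e e) u v
      = ((A.submatrix e e).submatrix (⇑(u.orderEmbOfFin rfl)) (⇑(v.orderEmbOfFin hcard))).det := by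
    rw [minorOn, dif_pos hcard]
  have himg : ∀ (w : Finset (Fin k)) (h : w.card = w.card) ,
      Finset.image (e ∘ ⇑(w.orderEmbOfFin h)) Finset.univ = w.image e := by
    intro w h
    ext x
    simp only [Finset.mem_image, Finset.mem_univ, true_and, Function.comp_apply]
    constructor
    · rintro ⟨i, rfl⟩
      exact ⟨_, Finset.orderEmbOfFin_mem w h i, rfl⟩
    · rintro ⟨y, hy, rfl⟩
      have : y ∈ Set.range ⇑(w.orderEmbOfFin h) := by
        rw [Finset.range_orderEmbOfFin]; exact hy
      obtain ⟨i, rfl⟩ := this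
      exact ⟨i, rfl⟩
  have himg2 :
      Finset.image (e ∘ ⇑(v.orderEmbOfFin hcard)) Finset.univ = v.image e := by
    ext x
    simp only [Finset.mem_image, Finset.mem_univ, true_and, Function.comp_apply]
    constructor
    · rintro ⟨i, rfl⟩
      exact ⟨_, Finset.orderEmbOfFin_mem v hcard i, rfl⟩
    · rintro ⟨y, hy, rfl⟩
      have : y ∈ Set.range ⇑(v.orderEmbOfFin hcard) := by
        rw [Finset.range_orderEmbOfFin]; exact hy
      obtain ⟨i, rfl⟩ := this
      exact ⟨i, rfl⟩
  rw [h1, submatrix_submatrix]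
  exact (minorOn_eq_det A (he.comp (u.orderEmbOfFin rfl).strictMono)
    (he.comp (v.orderEmbOfFin hcard).strictMono) (himg u rfl) himg2).symm

lemma image_succAbove_univ {m : ℕ} (r : Fin (m + 1)) :
    Finset.image r.succAbove Finset.univ = Finset.univ.erase r := by
  ext x
  simp only [Finset.mem_image, Finset.mem_univ, true_and, Finset.mem_erase, and_true]
  exact Fin.exists_succAbove_eq_iff

lemma adj_diag {m : ℕ} (M : Matrix (Fin m) (Fin m) ℝ) (j : Fin m) :
    M.adjugate j j = minorOn M (Finset.univ.erase j) (Finset.univ.erase j) := by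
  obtain ⟨k0, rfl⟩ : ∃ k0, m = k0 + 1 := ⟨m - 1, by have := j.pos; omega⟩
  rw [Matrix.adjugate_fin_succ_eq_det_submatrix]
  rw [minorOn_eq_det M (Fin.strictMono_succAbove j) (Fin.strictMono_succAbove j)
    (image_succAbove_univ j) (image_succAbove_univ j)]
  have : ((-1 : ℝ)) ^ ((j : ℕ) + (j : ℕ)) = 1 := by
    rw [← two_mul, pow_mul]; norm_num
  rw [this, one_mul]

end Comb

section Pmat
variable {m : ℕ}

lemma minorOn_empty (X : Matrix (Fin m) (Fin m) ℝ) : minorOn X ∅ ∅ = 1 := by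
  rw [minorOn, dif_pos rfl]
  haveI : IsEmpty (Fin (∅ : Finset (Fin m)).card) := by
    rw [Finset.card_empty]; infer_instance
  exact Matrix.det_isEmpty

lemma minorOn_diag_congr (B : Matrix (Fin m) (Fin m) ℝ) (d : Fin m → ℝ)
    (s : Finset (Fin m)) (hd : ∀ i ∈ s, d i = 0) :
    minorOn (B + Matrix.diagonal d) s s = minorOn B s s := by
  rw [minorOn_self, minorOn_self]
  congr 1
  ext i j
  simp only [psub, submatrix_apply, Matrix.add_apply, Matrix.diagonal_apply]
  rcases eq_or_ne ((s.orderEmbOfFin rfl) i) ((s.orderEmbOfFin rfl) j) with h | h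
  · rw [if_pos h, hd _ (Finset.orderEmbOfFin_mem s rfl i), add_zero]
  · rw [if_neg h, add_zero]

lemma minor_split (B : Matrix (Fin m) (Fin m) ℝ) (d : Fin m → ℝ)
    (s : Finset (Fin m)) (j : Fin m) (hj : j ∈ s) :
    minorOn (B + Matrix.diagonal d) s s
      = minorOn (B + Matrix.diagonal (Function.update d j 0)) s s
        + d j * minorOn (B + Matrix.diagonal (Function.update d j 0))
            (s.erase j) (s.erase j) := by
  set d' := Function.update d j 0 with hd'
  set e := ⇑(s.orderEmbOfFin rfl) with he
  have hinj : Function.Injective e := (s.orderEmbOfFin rfl).injective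
  obtain ⟨j', hj'⟩ : ∃ j', e j' = j := by
    have : j ∈ Finset.image e Finset.univ := by
      rw [orderEmbOfFin_image]; exact hj
    simpa using this
  set M' := (B + Matrix.diagonal d').submatrix e e with hM'def
  have hM : (B + Matrix.diagonal d).submatrix e e
      = M'.updateRow j' (M' j' + d j • (Pi.single j' 1 : Fin s.card → ℝ)) := by
    ext i c
    simp only [submatrix_apply, Matrix.add_apply, Matrix.diagonal_apply,
      Matrix.updateRow_apply, Pi.add_apply, Pi.smul_apply, smul_eq_mul,
      Pi.single_apply, hM'def]
    rcases eq_or_ne i j' with h1 | h1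
    · rw [h1, if_pos rfl]
      rcases eq_or_ne c j' with h2 | h2
      · rw [h2]
        simp only [if_pos rfl, hj', hd', Function.update_self, if_true]
        ring
      · have hec : e j' ≠ e c := fun h => h2 ((hinj h).symm)
        rw [if_neg hec, if_neg hec, if_neg h2]
        ring
    · rw [if_neg h1]
      have hei : e i ≠ j := fun h => h1 (hinj (h.trans hj'.symm))
      rcases eq_or_ne (e i) (e c) with h2 | h2
      · rw [if_pos h2, if_pos h2, hd', Function.update_of_ne hei]
      · rw [if_neg h2, if_neg h2]
  have hsplit : ((B + Matrix.diagonal d).submatrix e e).det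
      = M'.det + d j * (M'.updateRow j' (Pi.single j' 1)).det := by
    rw [hM, Matrix.det_updateRow_add, Matrix.updateRow_eq_self,
      Matrix.det_updateRow_smul]
  have hadj : (M'.updateRow j' (Pi.single j' 1)).det
      = minorOn (B + Matrix.diagonal d') (s.erase j) (s.erase j) := by
    rw [← Matrix.adjugate_apply, adj_diag]
    rw [minorOn_submatrix _ (s.orderEmbOfFin rfl).strictMono _ _ rfl]
    congr 1 <;>
    · rw [Finset.image_erase hinj, orderEmbOfFin_image, hj']
  calc minorOn (B + Matrix.diagonal d) s s
      = ((B + Matrix.diagonal d).submatrix e e).det := by rw [minorOn_self]; rfl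
    _ = M'.det + d j * (M'.updateRow j' (Pi.single j' 1)).det := hsplit
    _ = minorOn (B + Matrix.diagonal d') s s
        + d j * minorOn (B + Matrix.diagonal d') (s.erase j) (s.erase j) := by
        rw [hadj, minorOn_self (B + Matrix.diagonal d') s]; rfl

lemma pshift (B : Matrix (Fin m) (Fin m) ℝ)
    (h1 : ∀ s : Finset (Fin m), s.Nonempty → 0 < minorOn B s s) :
    ∀ (N : ℕ) (d : Fin m → ℝ), (∀ i, 0 ≤ d i) →
      ∀ s : Finset (Fin m), (s.filter (fun i => d i ≠ 0)).card ≤ N → s.Nonempty →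
        0 < minorOn (B + Matrix.diagonal d) s s := by
  intro N
  induction N with
  | zero =>
    intro d _ s hcard hs
    have hz : ∀ i ∈ s, d i = 0 := by
      intro i hi
      by_contra h
      have hmem : i ∈ s.filter (fun i => d i ≠ 0) := Finset.mem_filter.2 ⟨hi, h⟩
      have := Finset.card_pos.2 ⟨i, hmem⟩
      omega
    rw [minorOn_diag_congr B d s hz]
    exact h1 s hs
  | succ N ih =>
    intro d hd s hcard hs
    by_cases hc : (s.filter (fun i => d i ≠ 0)).card = 0
    · have hz : ∀ i ∈ s, d i = 0 := by
        intro i hi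
        by_contra h
        have hmem : i ∈ s.filter (fun i => d i ≠ 0) := Finset.mem_filter.2 ⟨hi, h⟩
        have := Finset.card_pos.2 ⟨i, hmem⟩
        omega
      rw [minorOn_diag_congr B d s hz]
      exact h1 s hs
    · obtain ⟨j, hjs, hdj⟩ : ∃ j, j ∈ s ∧ d j ≠ 0 := by
        obtain ⟨j, hj⟩ := Finset.card_pos.1 (Nat.pos_of_ne_zero hc)
        exact ⟨j, (Finset.mem_filter.1 hj).1, (Finset.mem_filter.1 hj).2⟩
      set d' := Function.update d j 0 with hd'
      have hd'nn : ∀ i, 0 ≤ d' i := by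
        intro i
        rcases eq_or_ne i j with rfl | h
        · simp [hd']
        · rw [hd', Function.update_of_ne h]; exact hd i
      have hsub : ∀ u : Finset (Fin m), u ⊆ s →
          (u.filter (fun i => d' i ≠ 0)).card ≤ N := by
        intro u hu
        have hss : u.filter (fun i => d' i ≠ 0) ⊆ (s.filter (fun i => d i ≠ 0)).erase j := by
          intro i hi
          obtain ⟨hi1, hi2⟩ := Finset.mem_filter.1 hi
          have hij : i ≠ j := by
            rintro rfl
            exact hi2 (by simp [hd'])
          refine Finset.mem_erase.2 ⟨hij, Finset.mem_filter.2 ⟨hu hi1, ?_⟩⟩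
          rwa [hd', Function.update_of_ne hij] at hi2
        have := Finset.card_le_card hss
        have := Finset.card_erase_of_mem
          (Finset.mem_filter.2 ⟨hjs, hdj⟩ : j ∈ s.filter (fun i => d i ≠ 0))
        omega
      rw [minor_split B d s j hjs]
      have h1pos : 0 < minorOn (B + Matrix.diagonal d') s s :=
        ih d' hd'nn s (hsub s Finset.Subset.rfl) hs
      have h2nn : 0 ≤ d j * minorOn (B + Matrix.diagonal d') (s.erase j) (s.erase j) := by
        have hdjpos : 0 < d j := lt_of_le_of_ne (hd j) (Ne.symm hdj)
        rcases Finset.eq_empty_or_nonempty (s.erase j) with he | hne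
        · rw [he, minorOn_empty]
          positivity
        · have := ih d' hd'nn (s.erase j) (hsub _ (Finset.erase_subset _ _)) hne
          positivity
      linarith

lemma noneg (B : Matrix (Fin m) (Fin m) ℝ)
    (h1 : ∀ s : Finset (Fin m), s.Nonempty → 0 < minorOn B s s) :
    ∀ t : ℝ, t ≤ 0 → 0 < (B - t • 1).det := by
  intro t ht
  rcases Nat.eq_zero_or_pos m with hm | hm
  · haveI : IsEmpty (Fin m) := by rw [hm]; infer_instance
    rw [Matrix.det_isEmpty]
    norm_num
  · have hne : (Finset.univ : Finset (Fin m)).Nonempty := ⟨⟨0, hm⟩, Finset.mem_univ _⟩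
    have heq : B - t • 1 = B + Matrix.diagonal (fun _ => -t) := by
      ext i j
      by_cases h : i = j <;>
        simp [Matrix.sub_apply, Matrix.add_apply, Matrix.smul_apply, Matrix.one_apply,
          Matrix.diagonal_apply, h] <;> ring
    rw [heq, ← minorOn_univ]
    exact pshift B h1 _ _ (fun i => by linarith) Finset.univ le_rfl hne

end Pmat

section Perron
variable {m : ℕ}

lemma mulVec_apply' (M : Matrix (Fin m) (Fin m) ℝ) (v : Fin m → ℝ) (i : Fin m) :
    M.mulVec v i = ∑ j, M i j * v j := rfl

lemma perron (hm : 0 < m) (P : Matrix (Fin m) (Fin m) ℝ) (hP : ∀ i j, 0 < P i j) :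
    ∃ (ρ : ℝ) (w : Fin m → ℝ), 0 < ρ ∧ (∀ i, 0 < w i) ∧ P.mulVec w = ρ • w := by
  haveI : Nonempty (Fin m) := ⟨⟨0, hm⟩⟩
  set K : Set (Fin m → ℝ) := {w | (∀ i, 0 ≤ w i) ∧ ∑ i, w i = 1} with hK
  have hmne : (m : ℝ) ≠ 0 := Nat.cast_ne_zero.2 (by omega)
  have hKex : (fun _ => (m : ℝ)⁻¹) ∈ K := by
    constructor
    · intro i; positivity
    · simp [Finset.sum_const, Finset.card_univ, hmne]
  have hmvpos : ∀ w ∈ K, ∀ i, 0 < P.mulVec w i := by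
    intro w hw i
    obtain ⟨j₀, hj₀⟩ : ∃ j, 0 < w j := by
      by_contra h
      push_neg at h
      have : ∀ j, w j = 0 := fun j => le_antisymm (h j) (hw.1 j)
      have : ∑ j, w j = 0 := Finset.sum_eq_zero fun j _ => this j
      rw [hw.2] at this; norm_num at this
    refine Finset.sum_pos' (fun j _ => ?_) ⟨j₀, Finset.mem_univ _, ?_⟩
    · exact mul_nonneg (hP i j).le (hw.1 j)
    · exact mul_pos (hP i j₀) hj₀
  set S : (Fin m → ℝ) → ℝ := fun w => ∑ i, P.mulVec w i with hS
  have hSpos : ∀ w ∈ K, 0 < S w := by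
    intro w hw
    exact Finset.sum_pos (fun i _ => hmvpos w hw i) Finset.univ_nonempty
  set Φ : (Fin m → ℝ) → (Fin m → ℝ) := fun v => (S v)⁻¹ • P.mulVec v with hΦ
  have hΦmem : ∀ v ∈ K, Φ v ∈ K ∧ ∀ i, 0 < Φ v i := by
    intro v hv
    have h1 : ∀ i, 0 < Φ v i := by
      intro i
      exact mul_pos (inv_pos.2 (hSpos v hv)) (hmvpos v hv i)
    refine ⟨⟨fun i => (h1 i).le, ?_⟩, h1⟩
    simp only [hΦ, Pi.smul_apply, smul_eq_mul, ← Finset.mul_sum]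
    exact inv_mul_cancel₀ (hSpos v hv).ne'
  have hmvcont : Continuous fun v : Fin m → ℝ => P.mulVec v := by
    refine continuous_pi fun i => ?_
    have : (fun v : Fin m → ℝ => P.mulVec v i) = fun v => ∑ j, P i j * v j := rfl
    rw [this]
    exact continuous_finset_sum _ fun j _ => continuous_const.mul (continuous_apply j)
  have hScont : Continuous S :=
    continuous_finset_sum _ fun i _ => (continuous_apply i).comp hmvcont
  have hKcl : IsClosed K := by
    have h1 : K = (⋂ i, {w : Fin m → ℝ | 0 ≤ w i}) ∩ {w | ∑ i, w i = 1} := by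
      ext w
      simp [hK, Set.mem_iInter]
    rw [h1]
    exact (isClosed_iInter fun i =>
        isClosed_le continuous_const (continuous_apply i)).inter
      (isClosed_eq (continuous_finset_sum _ fun i _ => continuous_apply i)
        continuous_const)
  have hKcomp : IsCompact K := by
    refine IsCompact.of_isClosed_subset
      (isCompact_Icc (a := (0 : Fin m → ℝ)) (b := 1)) hKcl ?_
    intro w hw
    rw [Set.mem_Icc]
    constructor
    · intro i; exact hw.1 i
    · intro i
      have := Finset.single_le_sum (f := w) (fun j _ => hw.1 j) (Finset.mem_univ i)
      rw [hw.2] at this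
      exact this
  set K' : Set (Fin m → ℝ) := Φ '' K with hK'
  have hK'comp : IsCompact K' := by
    refine hKcomp.image_of_continuousOn ?_
    exact ((hScont.continuousOn.inv₀ fun v hv => (hSpos v hv).ne').smul
      hmvcont.continuousOn)
  have hK'mem : ∀ w ∈ K', w ∈ K ∧ ∀ i, 0 < w i := by
    rintro w ⟨v, hv, rfl⟩
    exact hΦmem v hv
  set B₀ : ℝ := (∑ i, ∑ j, P i j) + 1 with hB₀def
  have hB₀ : ∀ (w : Fin m → ℝ) (c : ℝ), w ∈ K → (∀ i, c * w i ≤ P.mulVec w i) →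
      c ≤ B₀ := by
    intro w c hw hc
    have h1 : c = ∑ i, c * w i := by
      rw [← Finset.mul_sum, hw.2, mul_one]
    have h2 : ∑ i, c * w i ≤ ∑ i, P.mulVec w i :=
      Finset.sum_le_sum fun i _ => hc i
    have h3 : ∑ i, P.mulVec w i ≤ ∑ i, ∑ j, P i j := by
      refine Finset.sum_le_sum fun i _ => ?_
      rw [mulVec_apply']
      refine Finset.sum_le_sum fun j _ => ?_
      have hwj1 : w j ≤ 1 := by
        have := Finset.single_le_sum (f := w) (fun a _ => hw.1 a) (Finset.mem_univ j)
        rw [hw.2] at this; exact this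
      calc P i j * w j ≤ P i j * 1 := by
            exact mul_le_mul_of_nonneg_left hwj1 (hP i j).le
        _ = P i j := mul_one _
    rw [hB₀def]; linarith
  set T : Set ((Fin m → ℝ) × ℝ) :=
    {p | (p.1 ∈ K' ∧ p.2 ∈ Set.Icc (0:ℝ) B₀) ∧ ∀ i, p.2 * p.1 i ≤ P.mulVec p.1 i}
    with hT
  have hTeq : T = (K' ×ˢ Set.Icc (0:ℝ) B₀)
      ∩ ⋂ i, {p : (Fin m → ℝ) × ℝ | p.2 * p.1 i ≤ P.mulVec p.1 i} := by
    ext p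
    simp only [hT, Set.mem_setOf_eq, Set.mem_inter_iff, Set.mem_prod, Set.mem_iInter]
  have hTcomp : IsCompact T := by
    refine IsCompact.of_isClosed_subset
      (hK'comp.prod (isCompact_Icc (a := (0:ℝ)) (b := B₀))) ?_ ?_
    · rw [hTeq]
      refine IsClosed.inter (hK'comp.isClosed.prod isClosed_Icc) ?_
      refine isClosed_iInter fun i => ?_
      refine isClosed_le ?_ ?_
      · exact continuous_snd.mul ((continuous_apply i).comp continuous_fst)
      · have : (fun p : (Fin m → ℝ) × ℝ => P.mulVec p.1 i)
            = fun p => ∑ j, P i j * p.1 j := rfl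
        rw [this]
        exact continuous_finset_sum _ fun j _ =>
          continuous_const.mul ((continuous_apply j).comp continuous_fst)
    · rw [hTeq]
      exact Set.inter_subset_left
  -- nonemptiness with positive c
  set w₀ : Fin m → ℝ := Φ (fun _ => (m : ℝ)⁻¹) with hw₀
  have hw₀K' : w₀ ∈ K' := ⟨_, hKex, rfl⟩
  have hw₀K := (hK'mem w₀ hw₀K').1
  have hw₀pos := (hK'mem w₀ hw₀K').2
  have hratio : ∀ (u : Fin m → ℝ), (∀ i, 0 < u i) →
      ∀ i, (Finset.univ.inf' Finset.univ_nonempty fun i => P.mulVec u i / u i) * u i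
        ≤ P.mulVec u i := by
    intro u hu i
    have h1 : (Finset.univ.inf' Finset.univ_nonempty fun i => P.mulVec u i / u i)
        ≤ P.mulVec u i / u i := Finset.inf'_le _ (Finset.mem_univ i)
    calc _ ≤ (P.mulVec u i / u i) * u i :=
          mul_le_mul_of_nonneg_right h1 (hu i).le
      _ = P.mulVec u i := div_mul_cancel₀ _ (hu i).ne'
  set c₀ : ℝ := Finset.univ.inf' Finset.univ_nonempty fun i => P.mulVec w₀ i / w₀ i
    with hc₀
  have hc₀pos : 0 < c₀ := by
    rw [hc₀, Finset.lt_inf'_iff]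
    intro i _
    exact div_pos (hmvpos w₀ hw₀K i) (hw₀pos i)
  have hTne : (w₀, c₀) ∈ T := by
    refine ⟨⟨hw₀K', ⟨hc₀pos.le, ?_⟩⟩, hratio w₀ hw₀pos⟩
    exact hB₀ w₀ c₀ hw₀K (hratio w₀ hw₀pos)
  obtain ⟨⟨wst, ρ⟩, hmemT, hmax⟩ :=
    hTcomp.exists_isMaxOn ⟨_, hTne⟩ continuous_snd.continuousOn
  have hρpos : 0 < ρ := lt_of_lt_of_le hc₀pos (hmax hTne)
  have hwstK' : wst ∈ K' := hmemT.1.1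
  have hwstK := (hK'mem wst hwstK').1
  have hwstpos := (hK'mem wst hwstK').2
  have hge : ∀ i, ρ * wst i ≤ P.mulVec wst i := hmemT.2
  refine ⟨ρ, wst, hρpos, hwstpos, ?_⟩
  by_contra hne
  set δ : Fin m → ℝ := P.mulVec wst - ρ • wst with hδ
  have hδnn : ∀ i, 0 ≤ δ i := by
    intro i
    simp only [hδ, Pi.sub_apply, Pi.smul_apply, smul_eq_mul, sub_nonneg]
    exact hge i
  have hδne : ∃ i, 0 < δ i := by
    by_contra h
    push_neg at h
    have : ∀ i, δ i = 0 := fun i => le_antisymm (h i) (hδnn i)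
    apply hne
    funext i
    have := this i
    simp only [hδ, Pi.sub_apply, Pi.smul_apply, smul_eq_mul, sub_eq_zero] at this
    simpa using this
  obtain ⟨i₀, hi₀⟩ := hδne
  have hPδpos : ∀ i, 0 < P.mulVec δ i := by
    intro i
    refine Finset.sum_pos' (fun j _ => mul_nonneg (hP i j).le (hδnn j))
      ⟨i₀, Finset.mem_univ _, mul_pos (hP i i₀) hi₀⟩
  set u : Fin m → ℝ := Φ wst with hu
  have huK' : u ∈ K' := ⟨_, hwstK, rfl⟩
  have huK := (hK'mem u huK').1
  have hupos := (hK'mem u huK').2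
  have hPugt : ∀ i, ρ * u i < P.mulVec u i := by
    intro i
    have hSw : 0 < S wst := hSpos wst hwstK
    have h1 : P.mulVec u = (S wst)⁻¹ • P.mulVec (P.mulVec wst) := by
      rw [hu, hΦ]
      simp [Matrix.mulVec_smul]
    have h2 : P.mulVec (P.mulVec wst) = ρ • P.mulVec wst + P.mulVec δ := by
      conv_lhs => rw [show P.mulVec wst = ρ • wst + δ from by rw [hδ]; abel]
      rw [Matrix.mulVec_add, Matrix.mulVec_smul]
    rw [h1, h2]
    simp only [Pi.smul_apply, Pi.add_apply, smul_eq_mul]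
    have hSinv : 0 < (S wst)⁻¹ := inv_pos.2 hSw
    have hd := hPδpos i
    have hkey : 0 < (S wst)⁻¹ * P.mulVec δ i := mul_pos hSinv hd
    have hueq : u i = (S wst)⁻¹ * P.mulVec wst i := by
      rw [hu, hΦ]; simp
    rw [hueq]
    ring_nf
    nlinarith [hkey]
  set c₁ : ℝ := Finset.univ.inf' Finset.univ_nonempty fun i => P.mulVec u i / u i
    with hc₁
  have hc₁gt : ρ < c₁ := by
    rw [hc₁, Finset.lt_inf'_iff]
    intro i _
    rw [lt_div_iff₀ (hupos i)]
    exact hPugt i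
  have hmemu : (u, c₁) ∈ T :=
    ⟨⟨huK', ⟨le_of_lt (lt_trans hρpos hc₁gt), hB₀ u c₁ huK (hratio u hupos)⟩⟩,
      hratio u hupos⟩
  exact absurd (hmax hmemu) (not_le.2 hc₁gt)

lemma perron_simple (P : Matrix (Fin m) (Fin m) ℝ) (hP : ∀ i j, 0 < P i j)
    (ρ : ℝ) (w : Fin m → ℝ) (hw : ∀ i, 0 < w i) (heig : P.mulVec w = ρ • w)
    (y : Fin m → ℝ) (hy : P.mulVec y = ρ • y) : ∃ c : ℝ, y = c • w := by
  rcases Nat.eq_zero_or_pos m with hm | hm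
  · haveI : IsEmpty (Fin m) := by rw [hm]; infer_instance
    exact ⟨0, funext fun i => isEmptyElim i⟩
  haveI : Nonempty (Fin m) := ⟨⟨0, hm⟩⟩
  obtain ⟨i₀, -, hi₀⟩ := Finset.exists_max_image Finset.univ (fun i => y i / w i)
    Finset.univ_nonempty
  set c : ℝ := y i₀ / w i₀ with hc
  set u : Fin m → ℝ := c • w - y with hu
  have hunn : ∀ i, 0 ≤ u i := by
    intro i
    have h1 : y i / w i ≤ c := hi₀ i (Finset.mem_univ i)
    have h2 : y i ≤ c * w i := by
      rw [div_le_iff₀ (hw i)] at h1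
      linarith
    simp only [hu, Pi.sub_apply, Pi.smul_apply, smul_eq_mul, sub_nonneg]
    exact h2
  have hu0 : u i₀ = 0 := by
    simp only [hu, Pi.sub_apply, Pi.smul_apply, smul_eq_mul, hc]
    rw [div_mul_cancel₀ _ (hw i₀).ne']
    ring
  have hueig : P.mulVec u = ρ • u := by
    rw [hu, Matrix.mulVec_sub, Matrix.mulVec_smul, heig, hy, smul_sub, smul_comm]
  by_cases huz : u = 0
  · refine ⟨c, ?_⟩
    have := sub_eq_zero.1 (hu ▸ huz : c • w - y = 0)
    exact this.symm
  · exfalso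
    obtain ⟨j₀, hj₀⟩ : ∃ j, 0 < u j := by
      by_contra h
      push_neg at h
      exact huz (funext fun j => le_antisymm (h j) (hunn j))
    have hpos : 0 < P.mulVec u i₀ :=
      Finset.sum_pos' (fun j _ => mul_nonneg (hP i₀ j).le (hunn j))
        ⟨j₀, Finset.mem_univ _, mul_pos (hP i₀ j₀) hj₀⟩
    have : P.mulVec u i₀ = 0 := by
      rw [hueig]
      simp [hu0]
    rw [this] at hpos
    exact lt_irrefl _ hpos

end Perron

section Tau
variable {m : ℕ}

lemma econj (ε : Fin m → ℝ) (hε2 : ∀ i, ε i * ε i = 1)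
    (M : Matrix (Fin m) (Fin m) ℝ) (y : Fin m → ℝ) :
    (Matrix.of fun i j => ε i * M i j * ε j).mulVec (fun i => ε i * y i)
      = fun i => ε i * M.mulVec y i := by
  funext i
  rw [mulVec_apply', mulVec_apply', Finset.mul_sum]
  refine Finset.sum_congr rfl fun j _ => ?_
  simp only [Matrix.of_apply]
  calc (ε i * M i j * ε j) * (ε j * y j)
      = ε i * (M i j * y j) * (ε j * ε j) := by ring
    _ = ε i * (M i j * y j) := by rw [hε2 j, mul_one]

lemma eig_inv {M : Matrix (Fin m) (Fin m) ℝ} (hunit : IsUnit M.det)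
    {c : ℝ} (hc : c ≠ 0) {x : Fin m → ℝ} (h : M.mulVec x = c • x) :
    M⁻¹.mulVec x = c⁻¹ • x := by
  have h1 : M⁻¹.mulVec (M.mulVec x) = x := by
    rw [Matrix.mulVec_mulVec, Matrix.nonsing_inv_mul M hunit, Matrix.one_mulVec]
  rw [h, Matrix.mulVec_smul] at h1
  conv_rhs => rw [← h1]
  rw [smul_smul, inv_mul_cancel₀ hc, one_smul]

lemma taumain (hm : 0 < m) (B : Matrix (Fin m) (Fin m) ℝ)
    (h1 : ∀ s : Finset (Fin m), s.Nonempty → 0 < minorOn B s s)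
    (ε : Fin m → ℝ) (hε : ∀ i, ε i = 1 ∨ ε i = -1)
    (h2 : ∀ i j, 0 < ε i * ε j * B.adjugate i j) :
    ∃ lam : ℝ, 0 < lam ∧ (B - lam • 1).det = 0 ∧
      (∀ t : ℝ, (B - t • 1).det = 0 → lam ≤ t) ∧
      (∀ (r : Fin m) (t : ℝ), (B - t • 1).adjugate r r = 0 → lam < t) := by
  obtain ⟨k, rfl⟩ : ∃ k, m = k + 1 := ⟨m - 1, by omega⟩
  have hε2 : ∀ i, ε i * ε i = 1 := by
    intro i; rcases hε i with h | h <;> rw [h] <;> norm_num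
  have hεne : ∀ i, ε i ≠ 0 := by
    intro i; rcases hε i with h | h <;> rw [h] <;> norm_num
  have hdetB : 0 < B.det := by
    rw [← minorOn_univ]; exact h1 Finset.univ Finset.univ_nonempty
  have hunit : IsUnit B.det := isUnit_iff_ne_zero.2 hdetB.ne'
  set P : Matrix (Fin (k+1)) (Fin (k+1)) ℝ :=
    Matrix.of fun i j => ε i * B⁻¹ i j * ε j with hPdef
  have hPpos : ∀ i j, 0 < P i j := by
    intro i j
    have hBinv : B⁻¹ i j = (B.det)⁻¹ * B.adjugate i j := by
      rw [Matrix.inv_def]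
      simp [smul_eq_mul, Ring.inverse_eq_inv']
    simp only [hPdef, Matrix.of_apply, hBinv]
    have heq : ε i * ((B.det)⁻¹ * B.adjugate i j) * ε j
        = (B.det)⁻¹ * (ε i * ε j * B.adjugate i j) := by ring
    rw [heq]
    exact mul_pos (inv_pos.2 hdetB) (h2 i j)
  obtain ⟨ρ, w, hρ, hw, hPw⟩ := perron hm P hPpos
  obtain ⟨ρ₂, v, hρ₂, hv, hPv⟩ := perron hm Pᵀ (fun i j => hPpos j i)
  -- ρ₂ = ρ
  have hρeq : ρ₂ = ρ := by
    have hvw : 0 < ∑ i, v i * w i :=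
      Finset.sum_pos (fun i _ => mul_pos (hv i) (hw i)) Finset.univ_nonempty
    have h1' : ∑ i, v i * P.mulVec w i = ρ * ∑ i, v i * w i := by
      rw [hPw]
      simp only [Pi.smul_apply, smul_eq_mul]
      rw [Finset.mul_sum]
      exact Finset.sum_congr rfl fun i _ => by ring
    have h2' : ∑ i, v i * P.mulVec w i = ρ₂ * ∑ i, v i * w i := by
      have hs : ∑ i, v i * P.mulVec w i = ∑ j, (∑ i, P i j * v i) * w j := by
        simp_rw [mulVec_apply', Finset.mul_sum, Finset.sum_mul]
        rw [Finset.sum_comm]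
        exact Finset.sum_congr rfl fun j _ =>
          Finset.sum_congr rfl fun i _ => by ring
      rw [hs]
      have hcol : ∀ j, (∑ i, P i j * v i) = ρ₂ * v j := by
        intro j
        have hj := congrFun hPv j
        rw [mulVec_apply'] at hj
        simp only [Matrix.transpose_apply, Pi.smul_apply, smul_eq_mul] at hj
        rw [← hj]
      rw [Finset.sum_congr rfl fun j _ => by rw [hcol j]]
      simp_rw [mul_assoc]
      rw [← Finset.mul_sum]
    have := h1'.symm.trans h2'
    exact (mul_right_cancel₀ hvw.ne' this.symm)
  -- weighted positivity transfer
  have hswap : ∀ z : Fin (k+1) → ℝ, ∑ i, v i * P.mulVec z i = ρ * ∑ i, v i * z i := by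
    intro z
    have hs : ∑ i, v i * P.mulVec z i = ∑ j, (∑ i, P i j * v i) * z j := by
      simp_rw [mulVec_apply', Finset.mul_sum, Finset.sum_mul]
      rw [Finset.sum_comm]
      exact Finset.sum_congr rfl fun j _ =>
        Finset.sum_congr rfl fun i _ => by ring
    rw [hs]
    have hcol : ∀ j, (∑ i, P i j * v i) = ρ * v j := by
      intro j
      have hj := congrFun hPv j
      rw [mulVec_apply'] at hj
      simp only [Matrix.transpose_apply, Pi.smul_apply, smul_eq_mul] at hj
      rw [← hρeq, ← hj]
    rw [Finset.sum_congr rfl fun j _ => by rw [hcol j]]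
    simp_rw [mul_assoc]
    rw [← Finset.mul_sum]
  -- the eigenvector of B
  set x : Fin (k+1) → ℝ := fun i => ε i * w i with hxdef
  have hinvx : B⁻¹.mulVec x = ρ • x := by
    have hxx : (fun i => ε i * x i) = w := by
      funext i
      rw [hxdef, ← mul_assoc, hε2 i, one_mul]
    have h := econj ε hε2 B⁻¹ x
    rw [hxx, hPw] at h
    funext i
    have hi := congrFun h i
    simp only [Pi.smul_apply, smul_eq_mul] at hi ⊢
    have : ε i * (ρ * w i) = ε i * (ε i * (B⁻¹.mulVec x) i) := by rw [← hi]
    rw [← mul_assoc, ← mul_assoc, hε2 i, one_mul] at this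
    rw [← this, hxdef]
    ring
  have hBx : B.mulVec x = ρ⁻¹ • x := by
    have hiu : IsUnit (B⁻¹).det := by
      rw [Matrix.det_nonsing_inv]
      exact isUnit_iff_ne_zero.2 (by
        simp only [Ring.inverse_eq_inv']
        exact inv_ne_zero hdetB.ne')
    have := eig_inv hiu hρ.ne' hinvx
    rwa [Matrix.nonsing_inv_nonsing_inv B hunit] at this
  set lam : ℝ := ρ⁻¹ with hlamdef
  have hlampos : 0 < lam := inv_pos.2 hρ
  have hxne : x ≠ 0 := by
    intro h
    have := congrFun h ⟨0, by omega⟩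
    exact (mul_ne_zero (hεne _) (hw _).ne') this
  have hroot : (B - lam • 1).det = 0 := by
    rw [← Matrix.exists_mulVec_eq_zero_iff]
    refine ⟨x, hxne, ?_⟩
    rw [Matrix.sub_mulVec, hBx, Matrix.smul_mulVec, Matrix.one_mulVec]
    simp
  have hmin : ∀ t : ℝ, (B - t • 1).det = 0 → lam ≤ t := by
    intro t ht
    rcases le_or_gt t 0 with h | h
    · exact absurd ht (noneg B h1 t h).ne'
    · obtain ⟨y, hyne, hy0⟩ := Matrix.exists_mulVec_eq_zero_iff.2 ht
      have hBy : B.mulVec y = t • y := by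
        rw [Matrix.sub_mulVec, Matrix.smul_mulVec, Matrix.one_mulVec,
          sub_eq_zero] at hy0
        exact hy0
      have hinvy : B⁻¹.mulVec y = t⁻¹ • y := eig_inv hunit h.ne' hBy
      set y' : Fin (k+1) → ℝ := fun i => ε i * y i with hy'def
      have hPy' : P.mulVec y' = t⁻¹ • y' := by
        have hc := econj ε hε2 B⁻¹ y
        rw [hinvy] at hc
        rw [hy'def, hc]
        funext i
        simp only [Pi.smul_apply, smul_eq_mul]
        ring
      have habs : ∀ i, t⁻¹ * |y' i| ≤ P.mulVec (fun j => |y' j|) i := by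
        intro i
        have hb : |P.mulVec y' i| ≤ P.mulVec (fun j => |y' j|) i := by
          rw [mulVec_apply', mulVec_apply']
          refine (Finset.abs_sum_le_sum_abs _ _).trans ?_
          refine Finset.sum_le_sum fun j _ => ?_
          rw [abs_mul, abs_of_pos (hPpos i j)]
        have h2' : P.mulVec y' i = t⁻¹ * y' i := by
          rw [hPy']; simp
        calc t⁻¹ * |y' i| = |t⁻¹| * |y' i| := by
              rw [abs_of_pos (inv_pos.2 h)]
          _ = |t⁻¹ * y' i| := (abs_mul _ _).symm
          _ = |P.mulVec y' i| := by rw [h2']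
          _ ≤ _ := hb
      have hd : 0 < ∑ i, v i * |y' i| := by
        obtain ⟨i₁, hi₁⟩ : ∃ i, y i ≠ 0 := by
          by_contra hno
          push_neg at hno
          exact hyne (funext hno)
        refine Finset.sum_pos' (fun i _ => mul_nonneg (hv i).le (abs_nonneg _)) ?_
        refine ⟨i₁, Finset.mem_univ _, mul_pos (hv i₁) ?_⟩
        rw [hy'def, abs_pos]
        exact mul_ne_zero (hεne i₁) hi₁
      have hsum : t⁻¹ * (∑ i, v i * |y' i|) ≤ ρ * (∑ i, v i * |y' i|) := by
        have hstep : ∑ i, v i * (t⁻¹ * |y' i|) ≤ ∑ i, v i * P.mulVec (fun j => |y' j|) i :=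
          Finset.sum_le_sum fun i _ =>
            mul_le_mul_of_nonneg_left (habs i) (hv i).le
        rw [hswap (fun j => |y' j|)] at hstep
        calc t⁻¹ * (∑ i, v i * |y' i|) = ∑ i, v i * (t⁻¹ * |y' i|) := by
              rw [Finset.mul_sum]
              exact Finset.sum_congr rfl fun i _ => by ring
          _ ≤ ρ * ∑ i, v i * |y' i| := hstep
      have hinvle : t⁻¹ ≤ ρ := le_of_mul_le_mul_right
        (by simpa [mul_comm] using hsum) hd
      rw [hlamdef]
      exact (inv_le_comm₀ h hρ).1 hinvle
  refine ⟨lam, hlampos, hroot, hmin, ?_⟩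
  -- continuity infrastructure
  have hBtc : Continuous fun u : ℝ => B - u • (1 : Matrix (Fin (k+1)) (Fin (k+1)) ℝ) := by
    refine continuous_pi fun i => continuous_pi fun j => ?_
    show Continuous fun u : ℝ => B i j - u * (1 : Matrix (Fin (k+1)) (Fin (k+1)) ℝ) i j
    exact continuous_const.sub (continuous_id.mul continuous_const)
  have hfcont : Continuous fun u : ℝ => (B - u • 1).det := hBtc.matrix_det
  have hfpos : ∀ s : ℝ, 0 ≤ s → s < lam → 0 < (B - s • 1).det := by
    intro s hs0 hslam
    rcases eq_or_lt_of_le hs0 with rfl | hs0'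
    · simpa using hdetB
    · by_contra hle
      push_neg at hle
      rcases eq_or_lt_of_le hle with heq | hlt2
      · exact absurd (hmin s heq) (by linarith)
      · obtain ⟨c, hc, hc0⟩ : ∃ c ∈ Set.Icc (0:ℝ) s, (B - c • 1).det = 0 := by
          have hIVT := intermediate_value_Icc' (le_of_lt hs0') hfcont.continuousOn
          have hmem : (0:ℝ) ∈ Set.Icc ((B - s • 1).det) ((B - (0:ℝ) • 1).det) :=
            ⟨hlt2.le, by simpa using hdetB.le⟩
          obtain ⟨c, hc, hc0⟩ := hIVT hmem
          exact ⟨c, hc, hc0⟩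
        have := hmin c hc0
        linarith [hc.2]
  -- the matrix R(t) = E (B - t)⁻¹ E
  set Rm : ℝ → Matrix (Fin (k+1)) (Fin (k+1)) ℝ :=
    fun s => Matrix.of fun i j => ε i * (B - s • 1)⁻¹ i j * ε j with hRdef
  have hR0 : ∀ i j, Rm 0 i j = P i j := by
    intro i j
    simp [hRdef, hPdef]
  have hRmul : ∀ s u : ℝ, (B - s • 1).det ≠ 0 → (B - u • 1).det ≠ 0 →
      ∀ i j, Rm s i j = Rm u i j + (s - u) * ∑ l, Rm s i l * Rm u l j := by
    intro s u hs hu i j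
    have hsu : IsUnit (B - s • 1).det := isUnit_iff_ne_zero.2 hs
    have huu : IsUnit (B - u • 1).det := isUnit_iff_ne_zero.2 hu
    have hres : (B - s • 1)⁻¹ - (B - u • 1)⁻¹
        = (s - u) • ((B - s • 1)⁻¹ * (B - u • 1)⁻¹) := by
      have hdiff : (B - u • 1) - (B - s • 1)
          = (s - u) • (1 : Matrix (Fin (k+1)) (Fin (k+1)) ℝ) := by
        rw [sub_smul]
        abel
      calc (B - s • 1)⁻¹ - (B - u • 1)⁻¹
          = (B - s • 1)⁻¹ * (B - u • 1) * (B - u • 1)⁻¹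
            - (B - s • 1)⁻¹ * (B - s • 1) * (B - u • 1)⁻¹ := by
            rw [Matrix.mul_assoc, Matrix.mul_nonsing_inv _ huu, Matrix.mul_one,
              Matrix.nonsing_inv_mul _ hsu, Matrix.one_mul]
        _ = (B - s • 1)⁻¹ * ((B - u • 1) - (B - s • 1)) * (B - u • 1)⁻¹ := by
            noncomm_ring
        _ = (s - u) • ((B - s • 1)⁻¹ * (B - u • 1)⁻¹) := by
            rw [hdiff, mul_smul_comm, smul_mul_assoc, Matrix.mul_one]
    have hent : (B - s • 1)⁻¹ i j - (B - u • 1)⁻¹ i j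
        = (s - u) * ∑ l, (B - s • 1)⁻¹ i l * (B - u • 1)⁻¹ l j := by
      have h := congrFun (congrFun hres i) j
      simpa [Matrix.sub_apply, Matrix.smul_apply, Matrix.mul_apply, smul_eq_mul] using h
    have hterm : ∑ l, Rm s i l * Rm u l j
        = ε i * (∑ l, (B - s • 1)⁻¹ i l * (B - u • 1)⁻¹ l j) * ε j := by
      simp only [hRdef, Matrix.of_apply]
      rw [Finset.mul_sum, Finset.sum_mul]
      refine Finset.sum_congr rfl fun l _ => ?_
      calc (ε i * (B - s • 1)⁻¹ i l * ε l) * (ε l * (B - u • 1)⁻¹ l j * ε j)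
          = ε i * ((B - s • 1)⁻¹ i l * (B - u • 1)⁻¹ l j) * ε j * (ε l * ε l) := by
            ring
        _ = ε i * ((B - s • 1)⁻¹ i l * (B - u • 1)⁻¹ l j) * ε j := by
            rw [hε2 l, mul_one]
    rw [hterm]
    simp only [hRdef, Matrix.of_apply]
    linear_combination (ε i * ε j) * hent
  have hRcont : ∀ (tstar : ℝ), tstar < lam → ∀ a b,
      ContinuousOn (fun u => Rm u a b) (Set.Icc 0 tstar) := by
    intro tstar htlam a b
    have hdet_ne : ∀ u ∈ Set.Icc (0:ℝ) tstar, (B - u • 1).det ≠ 0 :=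
      fun u hu => (hfpos u hu.1 (lt_of_le_of_lt hu.2 htlam)).ne'
    have heqf : (fun u => Rm u a b)
        = fun u => ε a * (((B - u • 1).det)⁻¹ * (B - u • 1).adjugate a b) * ε b := by
      funext u
      simp only [hRdef, Matrix.of_apply, Matrix.inv_def, Matrix.smul_apply,
        smul_eq_mul, Ring.inverse_eq_inv']
    rw [heqf]
    have hadjc : Continuous fun u : ℝ => (B - u • 1).adjugate a b :=
      (continuous_apply b).comp ((continuous_apply a).comp hBtc.matrix_adjugate)
    exact (continuousOn_const.mul ((hfcont.continuousOn.inv₀ hdet_ne).mul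
      hadjc.continuousOn)).mul continuousOn_const
  have hRpos : ∀ s : ℝ, 0 ≤ s → s < lam → ∀ i j, 0 < Rm s i j := by
    intro tstar ht0 htlam i j
    by_contra hcon
    have hdet_ne : ∀ u ∈ Set.Icc (0:ℝ) tstar, (B - u • 1).det ≠ 0 :=
      fun u hu => (hfpos u hu.1 (lt_of_le_of_lt hu.2 htlam)).ne'
    set Z : Set ℝ := ⋃ (a : Fin (k+1)), ⋃ (b : Fin (k+1)),
      (Set.Icc (0:ℝ) tstar ∩ (fun u => Rm u a b) ⁻¹' Set.Iic 0) with hZdef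
    have hZsub : Z ⊆ Set.Icc 0 tstar := by
      intro z hz
      simp only [hZdef, Set.mem_iUnion] at hz
      obtain ⟨a, b, hz1, _⟩ := hz
      exact hz1
    have hZne : Z.Nonempty := by
      refine ⟨tstar, ?_⟩
      simp only [hZdef, Set.mem_iUnion]
      push_neg at hcon
      exact ⟨i, j, ⟨⟨ht0, le_refl _⟩, hcon⟩⟩
    have hZcl : IsClosed Z := by
      refine isClosed_iUnion_of_finite fun a => isClosed_iUnion_of_finite fun b => ?_
      exact (hRcont tstar htlam a b).preimage_isClosed_of_isClosed isClosed_Icc isClosed_Iic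
    have hbdd : BddBelow Z := (bddBelow_Icc).mono hZsub
    set t₁ : ℝ := sInf Z with ht₁def
    have ht₁Z : t₁ ∈ Z := hZcl.csInf_mem hZne hbdd
    have ht₁Icc : t₁ ∈ Set.Icc (0:ℝ) tstar := hZsub ht₁Z
    have h0notZ : (0:ℝ) ∉ Z := by
      intro h0
      simp only [hZdef, Set.mem_iUnion] at h0
      obtain ⟨a, b, _, h2'⟩ := h0
      rw [Set.mem_preimage, Set.mem_Iic, hR0 a b] at h2'
      exact absurd (hPpos a b) (not_lt.2 h2')
    have ht₁pos : 0 < t₁ := by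
      rcases eq_or_lt_of_le ht₁Icc.1 with heq | h
      · exact absurd (heq ▸ ht₁Z) h0notZ
      · exact h
    have hposbelow : ∀ u, 0 ≤ u → u < t₁ → ∀ a b, 0 < Rm u a b := by
      intro u hu0 hut₁ a b
      by_contra hab
      have : u ∈ Z := by
        simp only [hZdef, Set.mem_iUnion]
        exact ⟨a, b, ⟨⟨hu0, le_trans hut₁.le ht₁Icc.2⟩,
          Set.mem_preimage.2 (Set.mem_Iic.2 (not_lt.1 hab))⟩⟩
      exact absurd (csInf_le hbdd this) (not_le.2 hut₁)
    have hR1nn : ∀ a b, 0 ≤ Rm t₁ a b := by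
      intro a b
      have hcw : ContinuousWithinAt (fun u => Rm u a b) (Set.Ico 0 t₁) t₁ := by
        refine ((hRcont tstar htlam a b).continuousWithinAt ht₁Icc).mono ?_
        intro z hz
        exact ⟨hz.1, le_trans hz.2.le ht₁Icc.2⟩
      have hnebot : (nhdsWithin t₁ (Set.Ico 0 t₁)).NeBot := by
        rw [← mem_closure_iff_nhdsWithin_neBot, closure_Ico ht₁pos.ne]
        exact ⟨ht₁Icc.1, le_refl _⟩
      refine ge_of_tendsto hcw ?_
      refine Filter.eventually_of_mem self_mem_nhdsWithin fun u hu => ?_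
      exact (hposbelow u hu.1 hu.2 a b).le
    have ht₁half : ∀ a b, 0 < Rm t₁ a b := by
      intro a b
      have hd1 : (B - t₁ • 1).det ≠ 0 := hdet_ne t₁ ht₁Icc
      have hd2 : (B - (t₁/2) • 1).det ≠ 0 :=
        hdet_ne (t₁/2) ⟨by linarith, by nlinarith [ht₁Icc.2]⟩
      have hmulrel := hRmul t₁ (t₁/2) hd1 hd2 a b
      have hpos2 : ∀ a' b', 0 < Rm (t₁/2) a' b' :=
        fun a' b' => hposbelow (t₁/2) (by linarith) (by linarith) a' b'
      have hsumnn : 0 ≤ ∑ l, Rm t₁ a l * Rm (t₁/2) l b :=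
        Finset.sum_nonneg fun l _ => mul_nonneg (hR1nn a l) (hpos2 l b).le
      have := hpos2 a b
      nlinarith [hmulrel]
    have : t₁ ∉ Z := by
      intro hmem
      simp only [hZdef, Set.mem_iUnion] at hmem
      obtain ⟨a, b, _, h2'⟩ := hmem
      rw [Set.mem_preimage, Set.mem_Iic] at h2'
      exact absurd (ht₁half a b) (not_lt.2 h2')
    exact this ht₁Z
  -- relation between adjugate diagonal and determinant of submatrix
  have hsubdet : ∀ (r : Fin (k+1)) (s : ℝ), (B - s • 1).adjugate r r
      = ((B.submatrix r.succAbove r.succAbove) - s • 1).det := by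
    intro r s
    rw [Matrix.adjugate_fin_succ_eq_det_submatrix]
    have h1m : ((B - s • 1).submatrix r.succAbove r.succAbove)
        = B.submatrix r.succAbove r.succAbove - s • 1 := by
      ext a b
      simp only [submatrix_apply, Matrix.sub_apply, Matrix.smul_apply,
        Matrix.one_apply, smul_eq_mul]
      congr 2
      by_cases hab : a = b
      · simp [hab]
      · rw [if_neg (fun h => hab (r.succAbove_right_injective h)), if_neg hab]
    rw [h1m]
    have hsg : ((-1:ℝ)) ^ ((r:ℕ) + (r:ℕ)) = 1 := by
      rw [← two_mul, pow_mul]; norm_num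
    rw [hsg, one_mul]
  have hadjrel : ∀ (r : Fin (k+1)) (s : ℝ), (B - s • 1).det ≠ 0 →
      (B - s • 1).adjugate r r = (B - s • 1).det * Rm s r r := by
    intro r s hs
    simp only [hRdef, Matrix.of_apply, Matrix.inv_def, Matrix.smul_apply,
      smul_eq_mul, Ring.inverse_eq_inv']
    have hre : (B - s • 1).det * (ε r * ((B - s • 1).det⁻¹ * (B - s • 1).adjugate r r) * ε r)
        = ((B - s • 1).det * ((B - s • 1).det)⁻¹) * ((ε r * ε r) * (B - s • 1).adjugate r r) := by
      ring
    rw [hre, mul_inv_cancel₀ hs, hε2 r, one_mul, one_mul]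
  -- dot swap helper
  have hdotswap : ∀ (M : Matrix (Fin (k+1)) (Fin (k+1)) ℝ) (a b : Fin (k+1) → ℝ),
      ∑ i, a i * M.mulVec b i = ∑ j, Mᵀ.mulVec a j * b j := by
    intro M a b
    simp_rw [mulVec_apply', Finset.mul_sum, Finset.sum_mul]
    rw [Finset.sum_comm]
    refine Finset.sum_congr rfl fun j _ => Finset.sum_congr rfl fun i' _ => ?_
    simp only [Matrix.transpose_apply]
    ring
  -- key conjugation transfer
  have hkey : ∀ (M : Matrix (Fin (k+1)) (Fin (k+1)) ℝ) (c : ℝ) (z : Fin (k+1) → ℝ),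
      (Matrix.of fun i j => ε i * M i j * ε j).mulVec z = c • z →
      M.mulVec (fun i => ε i * z i) = c • (fun i => ε i * z i) := by
    intro M c z hz
    have hzz : (fun i => ε i * (fun i' => ε i' * z i') i) = z := by
      funext i
      simp only
      rw [← mul_assoc, hε2 i, one_mul]
    have hc := econj ε hε2 M (fun i => ε i * z i)
    rw [hzz, hz] at hc
    funext i
    have hi := congrFun hc i
    simp only [Pi.smul_apply, smul_eq_mul] at hi ⊢
    have h3 : ε i * (c * z i) = ε i * (ε i * M.mulVec (fun i' => ε i' * z i') i) := by
      rw [← hi]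
    rw [← mul_assoc, ← mul_assoc, hε2 i, one_mul] at h3
    rw [← h3]
    ring
  -- the left eigenvector
  have hPT : Pᵀ = Matrix.of fun i j => ε i * (Bᵀ)⁻¹ i j * ε j := by
    ext i j
    simp only [Matrix.transpose_apply, hPdef, Matrix.of_apply,
      ← Matrix.transpose_nonsing_inv]
    ring
  have hTdet : IsUnit Bᵀ.det := by rwa [Matrix.det_transpose]
  have hinvwl : (Bᵀ)⁻¹.mulVec (fun i => ε i * v i) = ρ • (fun i => ε i * v i) := by
    refine hkey (Bᵀ)⁻¹ ρ v ?_
    rw [← hPT, hPv, hρeq]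
  have hBTwl : Bᵀ.mulVec (fun i => ε i * v i) = lam • (fun i => ε i * v i) := by
    have hiu : IsUnit ((Bᵀ)⁻¹).det := by
      rw [Matrix.det_nonsing_inv]
      exact isUnit_iff_ne_zero.2 (by
        simp only [Ring.inverse_eq_inv']
        rw [Matrix.det_transpose]
        exact inv_ne_zero hdetB.ne')
    have := eig_inv hiu hρ.ne' hinvwl
    rwa [Matrix.nonsing_inv_nonsing_inv Bᵀ hTdet] at this
  -- final clause
  intro r t hadj0
  have h1sub : ∀ u : Finset (Fin k), u.Nonempty →
      0 < minorOn (B.submatrix r.succAbove r.succAbove) u u := by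
    intro u hu
    rw [minorOn_submatrix B (Fin.strictMono_succAbove r) u u rfl]
    exact h1 _ (hu.image _)
  by_contra hnot
  push_neg at hnot
  rcases eq_or_lt_of_le hnot with heqt | hlt
  · -- t = lam : eigenvector argument
    have hgsub : ((B.submatrix r.succAbove r.succAbove) - lam • 1).det = 0 := by
      rw [← hsubdet, ← heqt]
      exact hadj0
    obtain ⟨vv, hvvne, hvv0⟩ := Matrix.exists_mulVec_eq_zero_iff.2 hgsub
    have hvv : (B.submatrix r.succAbove r.succAbove).mulVec vv = lam • vv := by
      rw [Matrix.sub_mulVec, Matrix.smul_mulVec, Matrix.one_mulVec,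
        sub_eq_zero] at hvv0
      exact hvv0
    set vt : Fin (k+1) → ℝ := r.insertNth 0 vv with hvt
    set cc : ℝ := ∑ j, B r (r.succAbove j) * vv j with hcc
    have hext : B.mulVec vt = lam • vt + cc • (Pi.single r 1 : Fin (k+1) → ℝ) := by
      funext i
      rcases eq_or_ne i r with rfl | hir
      · rw [mulVec_apply', Fin.sum_univ_succAbove (fun j => B i j * vt j) i]
        simp only [hvt, Fin.insertNth_apply_same, Fin.insertNth_apply_succAbove,
          mul_zero, zero_add, Pi.add_apply, Pi.smul_apply, Pi.single_eq_same,
          smul_eq_mul]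
        rw [hcc]
        ring
      · obtain ⟨l, rfl⟩ := Fin.exists_succAbove_eq_iff.2 hir
        rw [mulVec_apply', Fin.sum_univ_succAbove (fun j => B (r.succAbove l) j * vt j) r]
        simp only [hvt, Fin.insertNth_apply_same, Fin.insertNth_apply_succAbove,
          mul_zero, zero_add, Pi.add_apply, Pi.smul_apply, smul_eq_mul]
        rw [Pi.single_eq_of_ne (Fin.succAbove_ne r l)]
        have hl := congrFun hvv l
        rw [mulVec_apply'] at hl
        simp only [submatrix_apply, Pi.smul_apply, smul_eq_mul] at hl
        rw [hl]
        ring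
    have hpair : cc * (ε r * v r) = 0 := by
      have h1' : ∑ i, (ε i * v i) * B.mulVec vt i
          = lam * (∑ i, (ε i * v i) * vt i) + cc * (ε r * v r) := by
        rw [hext]
        simp only [Pi.add_apply, Pi.smul_apply, smul_eq_mul, mul_add]
        rw [Finset.sum_add_distrib]
        congr 1
        · rw [Finset.mul_sum]
          exact Finset.sum_congr rfl fun i' _ => by ring
        · rw [Finset.sum_eq_single r]
          · rw [Pi.single_eq_same]; ring
          · intro b' _ hb'
            rw [Pi.single_eq_of_ne hb', mul_zero, mul_zero]
          · intro habs
            exact absurd (Finset.mem_univ r) habs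
      have h2' : ∑ i, (ε i * v i) * B.mulVec vt i
          = lam * (∑ i, (ε i * v i) * vt i) := by
        rw [hdotswap B (fun i => ε i * v i) vt, hBTwl]
        simp only [Pi.smul_apply, smul_eq_mul]
        rw [Finset.mul_sum]
        exact Finset.sum_congr rfl fun i' _ => by ring
      rw [h2'] at h1'
      linarith
    have hccz : cc = 0 := by
      have hwlr : ε r * v r ≠ 0 := mul_ne_zero (hεne r) (hv r).ne'
      exact (mul_eq_zero.1 hpair).resolve_right hwlr
    have hBvt : B.mulVec vt = lam • vt := by
      rw [hext, hccz, zero_smul, add_zero]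
    have hinv_vt : B⁻¹.mulVec vt = ρ • vt := by
      have := eig_inv hunit hlampos.ne' hBvt
      rwa [hlamdef, inv_inv] at this
    have hPvt : P.mulVec (fun i => ε i * vt i) = ρ • (fun i => ε i * vt i) := by
      have hc := econj ε hε2 B⁻¹ vt
      rw [hinv_vt] at hc
      rw [hPdef, hc]
      funext i'
      simp only [Pi.smul_apply, smul_eq_mul]
      ring
    obtain ⟨c', hc'⟩ := perron_simple P hPpos ρ w hw hPw _ hPvt
    have hc'0 : c' = 0 := by
      have h0 := congrFun hc' r
      simp only [hvt, Fin.insertNth_apply_same, mul_zero, Pi.smul_apply,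
        smul_eq_mul] at h0
      exact ((mul_eq_zero.1 h0.symm).resolve_right (hw r).ne').symm ▸ rfl
    have hvvz : vv = 0 := by
      funext l
      have hl := congrFun hc' (r.succAbove l)
      simp only [hvt, Fin.insertNth_apply_succAbove, hc'0, Pi.smul_apply,
        smul_eq_mul, zero_mul] at hl
      exact (mul_eq_zero.1 hl).resolve_left (hεne _)
    exact hvvne hvvz
  · -- t < lam
    rcases le_or_gt t 0 with hneg | hpos
    · have hng := noneg _ h1sub t hneg
      rw [← hsubdet] at hng
      exact hng.ne' hadj0
    · have hdetp := hfpos t hpos.le hlt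
      have hRrr := hRpos t hpos.le hlt r r
      have harel := hadjrel r t hdetp.ne'
      rw [hadj0] at harel
      nlinarith [mul_pos hdetp hRrr]

end Tau

section Adjsign
variable {m : ℕ}

lemma adjsign (hm : 2 ≤ m) (B : Matrix (Fin m) (Fin m) ℝ)
    {J : Set {s : Finset (Fin m) // s.card = m - 1}}
    (hJ : IsSJS J (compound B (m - 1))) :
    ∃ ε : Fin m → ℝ, (∀ i, ε i = 1 ∨ ε i = -1) ∧
      ∀ i j, 0 < ε i * ε j * B.adjugate i j := by
  classical
  obtain ⟨k, rfl⟩ : ∃ k, m = k + 1 := ⟨m - 1, by omega⟩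
  have hcard : ∀ i : Fin (k+1), (Finset.univ.erase i).card = k + 1 - 1 := by
    intro i
    rw [Finset.card_erase_of_mem (Finset.mem_univ i), Finset.card_univ,
      Fintype.card_fin]
  set es : Fin (k+1) → {s : Finset (Fin (k+1)) // s.card = k + 1 - 1} :=
    fun i => ⟨Finset.univ.erase i, hcard i⟩ with hes
  set σ : Fin (k+1) → ℝ := fun i => if es i ∈ J then 1 else -1 with hσ
  obtain ⟨⟨hpos, hneg⟩, hne⟩ := hJ
  have hkey : ∀ s t, 0 < (if s ∈ J then (1:ℝ) else -1) * (if t ∈ J then (1:ℝ) else -1)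
      * compound B (k + 1 - 1) s t := by
    intro s t
    by_cases hs : s ∈ J <;> by_cases ht : t ∈ J
    · rw [if_pos hs, if_pos ht]
      have h3 := lt_of_le_of_ne (hpos s t (Or.inl ⟨hs, ht⟩)) (Ne.symm (hne s t))
      nlinarith
    · rw [if_pos hs, if_neg ht]
      have h3 := lt_of_le_of_ne (hneg s t (Or.inl ⟨hs, ht⟩)) (hne s t)
      nlinarith
    · rw [if_neg hs, if_pos ht]
      have h3 := lt_of_le_of_ne (hneg s t (Or.inr ⟨hs, ht⟩)) (hne s t)
      nlinarith
    · rw [if_neg hs, if_neg ht]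
      have h3 := lt_of_le_of_ne (hpos s t (Or.inr ⟨hs, ht⟩)) (Ne.symm (hne s t))
      nlinarith
  refine ⟨fun i => (-1) ^ (i : ℕ) * σ i, ?_, ?_⟩
  · intro i
    have h1 : (-1:ℝ)^(i:ℕ) = 1 ∨ (-1:ℝ)^(i:ℕ) = -1 := by
      rcases Nat.even_or_odd (i:ℕ) with he | ho
      · exact Or.inl he.neg_one_pow
      · exact Or.inr ho.neg_one_pow
    have h2 : σ i = 1 ∨ σ i = -1 := by
      by_cases h : es i ∈ J
      · exact Or.inl (by simp [hσ, h])
      · exact Or.inr (by simp [hσ, h])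
    rcases h1 with h1 | h1 <;> rcases h2 with h2 | h2 <;>
      simp only [h1, h2] <;> norm_num
  · intro i j
    have hadj : B.adjugate i j = (-1:ℝ) ^ ((j:ℕ) + (i:ℕ)) *
        compound B (k + 1 - 1) (es j) (es i) := by
      rw [Matrix.adjugate_fin_succ_eq_det_submatrix]
      congr 1
      exact (minorOn_eq_det B (Fin.strictMono_succAbove j) (Fin.strictMono_succAbove i)
        (image_succAbove_univ j) (image_succAbove_univ i)).symm
    have h4 : ((-1:ℝ) ^ (i:ℕ)) * ((-1:ℝ) ^ (j:ℕ)) * ((-1:ℝ) ^ ((j:ℕ)+(i:ℕ))) = 1 := by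
      rw [← pow_add, ← pow_add]
      exact Even.neg_one_pow ⟨(i:ℕ)+(j:ℕ), by ring⟩
    have hgoal : ((-1:ℝ)^(i:ℕ) * σ i) * ((-1:ℝ)^(j:ℕ) * σ j)
        * ((-1:ℝ)^((j:ℕ)+(i:ℕ)) * compound B (k+1-1) (es j) (es i))
        = σ j * σ i * compound B (k+1-1) (es j) (es i) := by
      linear_combination (σ i * σ j * compound B (k+1-1) (es j) (es i)) * h4
    rw [hadj, hgoal]
    exact hkey (es j) (es i)

end Adjsign

section Glue

lemma charroot {m : ℕ} (M : Matrix (Fin m) (Fin m) ℝ) (t : ℝ) :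
    M.charpoly.IsRoot t ↔ (M - t • 1).det = 0 := by
  have h1 : M.charpoly.eval t = ((Matrix.charmatrix M).map (Polynomial.evalRingHom t)).det := by
    rw [Matrix.charpoly]
    rw [show Polynomial.eval t (Matrix.charmatrix M).det
        = (Polynomial.evalRingHom t) (Matrix.charmatrix M).det from rfl]
    exact RingHom.map_det (Polynomial.evalRingHom t) _
  have h2 : (Matrix.charmatrix M).map (Polynomial.evalRingHom t) = t • 1 - M := by
    ext i j
    by_cases h : i = j
    · subst h
      simp [Matrix.charmatrix_apply_eq, Matrix.map_apply, Matrix.sub_apply,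
        Matrix.smul_apply, Matrix.one_apply, smul_eq_mul]
    · simp [Matrix.charmatrix_apply_ne _ _ _ h, Matrix.map_apply, Matrix.sub_apply,
        Matrix.smul_apply, Matrix.one_apply, h, smul_eq_mul]
  have h3 : (t • 1 - M : Matrix (Fin m) (Fin m) ℝ) = -(M - t • 1) := by rw [neg_sub]
  have h4 : M.charpoly.eval t = (-1:ℝ)^m * (M - t • 1).det := by
    rw [h1, h2, h3, Matrix.det_neg]
    simp [Fintype.card_fin]
  constructor
  · intro h
    have := h4.symm.trans h
    rcases mul_eq_zero.1 this with h' | h'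
    · exact absurd h' (pow_ne_zero _ (by norm_num))
    · exact h'
  · intro h
    show M.charpoly.eval t = 0
    rw [h4, h, mul_zero]

lemma psub_sub_smul_one {n : ℕ} (A : Matrix (Fin n) (Fin n) ℝ) (α : Finset (Fin n))
    (t : ℝ) : psub A α - t • 1 = psub (A - t • 1) α := by
  ext i j
  simp only [psub, submatrix_apply, Matrix.sub_apply, Matrix.smul_apply,
    Matrix.one_apply, smul_eq_mul]
  congr 2
  by_cases h : i = j
  · simp [h]
  · rw [if_neg h, if_neg (fun hh => h ((α.orderEmbOfFin rfl).injective hh))]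

lemma adj_psub_diag {n : ℕ} (C : Matrix (Fin n) (Fin n) ℝ) (α : Finset (Fin n))
    (r : Fin α.card) :
    (psub C α).adjugate r r
      = minorOn C (α.erase (α.orderEmbOfFin rfl r)) (α.erase (α.orderEmbOfFin rfl r)) := by
  rw [adj_diag]
  have hps : psub C α = C.submatrix (⇑(α.orderEmbOfFin rfl)) (⇑(α.orderEmbOfFin rfl)) := rfl
  rw [hps, minorOn_submatrix C (α.orderEmbOfFin rfl).strictMono _ _ rfl]
  congr 1 <;>
  · rw [Finset.image_erase (α.orderEmbOfFin rfl).injective, orderEmbOfFin_image]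

lemma lval_eq {m : ℕ} (M : Matrix (Fin m) (Fin m) ℝ) (lam : ℝ)
    (hroot : (M - lam • 1).det = 0) (hmin : ∀ t, (M - t • 1).det = 0 → lam ≤ t) :
    lval M = ((lam : ℝ) : EReal) := by
  have hset : {t : ℝ | M.charpoly.IsRoot t} = {t : ℝ | (M - t • 1).det = 0} := by
    ext t; exact charroot M t
  rw [lval, hset]
  refine le_antisymm ?_ ?_
  · exact sInf_le (Set.mem_insert_iff.2 (Or.inr ⟨lam, hroot, rfl⟩))
  · refine le_sInf ?_
    intro b hb
    rcases Set.mem_insert_iff.1 hb with rfl | ⟨t, ht, rfl⟩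
    · exact le_top
    · exact EReal.coe_le_coe_iff.2 (hmin t ht)

lemma prin {n : ℕ} (A : Matrix (Fin n) (Fin n) ℝ) (hA : IsSJSK A) :
    ∀ α : Finset (Fin n), α.Nonempty → 0 < minorOn A α α := by
  obtain ⟨hdet, hcomp⟩ := hA
  have key : ∀ d : ℕ, ∀ α : Finset (Fin n), α.Nonempty → α.card = n - d →
      0 < minorOn A α α := by
    intro d
    induction d with
    | zero =>
      intro α hne hcard
      have hαu : α = Finset.univ := by
        refine Finset.eq_univ_of_card α ?_
        rw [hcard, Nat.sub_zero, Fintype.card_fin]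
      rw [hαu, minorOn_univ]
      exact hdet
    | succ d ih =>
      intro α hne hcard
      rcases Nat.eq_zero_or_pos (n - (d+1)) with hz | hposd
      · rw [hz] at hcard
        exact absurd (Finset.card_eq_zero.1 hcard) (Finset.nonempty_iff_ne_empty.1 hne)
      · have hlt : α.card < n := by omega
        obtain ⟨x, hx⟩ : ∃ x, x ∉ α := by
          by_contra hall
          push_neg at hall
          have : α = Finset.univ := Finset.eq_univ_iff_forall.2 hall
          rw [this, Finset.card_univ, Fintype.card_fin] at hlt
          omega
        set γ := insert x α with hγ
        have hγcard : γ.card = α.card + 1 := Finset.card_insert_of_notMem hx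
        have hγ2 : 2 ≤ γ.card := by
          have := Finset.card_pos.2 hne
          omega
        obtain ⟨J, hJ⟩ := hcomp γ hγ2
        set e := ⇑(γ.orderEmbOfFin rfl) with he
        set s : Finset (Fin γ.card) := Finset.univ.filter (fun i => e i ∈ α) with hs
        have himg : s.image e = α := by
          ext z
          simp only [hs, Finset.mem_image, Finset.mem_filter, Finset.mem_univ, true_and]
          constructor
          · rintro ⟨i, hi, rfl⟩; exact hi
          · intro hz
            have hzγ : z ∈ γ := Finset.mem_insert_of_mem hz
            have hz2 : z ∈ Finset.image e Finset.univ := by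
              rw [he, orderEmbOfFin_image]; exact hzγ
            obtain ⟨i, -, rfl⟩ := Finset.mem_image.1 hz2
            exact ⟨i, hz, rfl⟩
        have hscard : s.card = γ.card - 1 := by
          have h1 : (s.image e).card = s.card :=
            Finset.card_image_of_injective _ (γ.orderEmbOfFin rfl).injective
          rw [himg] at h1
          omega
        obtain ⟨⟨hposJ, _⟩, hneJ⟩ := hJ
        have hdiag : 0 < compound (psub A γ) (γ.card - 1) ⟨s, hscard⟩ ⟨s, hscard⟩ := by
          refine lt_of_le_of_ne (hposJ _ _ ?_) (Ne.symm (hneJ _ _))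
          by_cases hmem : (⟨s, hscard⟩ : {u : Finset (Fin γ.card) // u.card = γ.card - 1}) ∈ J
          · exact Or.inl ⟨hmem, hmem⟩
          · exact Or.inr ⟨hmem, hmem⟩
        have hcomp_eq : compound (psub A γ) (γ.card - 1) ⟨s, hscard⟩ ⟨s, hscard⟩
            = minorOn A α α := by
          show minorOn (psub A γ) s s = minorOn A α α
          have hps : psub A γ = A.submatrix e e := rfl
          rw [hps, minorOn_submatrix A (γ.orderEmbOfFin rfl).strictMono s s rfl, himg]
        rw [hcomp_eq] at hdiag
        exact hdiag
  intro α hne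
  refine key (n - α.card) α hne ?_
  have h1 : α.card ≤ n := by
    have := Finset.card_le_univ α
    rwa [Fintype.card_fin] at this
  omega

end Glue

/-- Every SJSK-matrix is a strict τ-matrix (τ^<-matrix):
`l(A) > 0`, every principal submatrix of `A` has a real eigenvalue, and
`l(A(α)) < l(A(β)) < ∞` whenever `∅ ≠ β ⊊ α ⊆ {1,…,n}`. -/
theorem sjsk_is_strict_tau {n : ℕ} (A : Matrix (Fin n) (Fin n) ℝ) (hA : IsSJSK A) :
    (0 : EReal) < lval A ∧
    (∀ α : Finset (Fin n), α.Nonempty → lval (psub A α) < ⊤) ∧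
    (∀ α β : Finset (Fin n), β.Nonempty → β ⊂ α →
      lval (psub A α) < lval (psub A β) ∧ lval (psub A β) < ⊤) := by
  classical
  have hprin := prin A hA
  obtain ⟨hdet, hcomp⟩ := hA
  have h1p : ∀ α : Finset (Fin n), ∀ s : Finset (Fin α.card), s.Nonempty →
      0 < minorOn (psub A α) s s := by
    intro α s hs
    have hps : psub A α
        = A.submatrix (⇑(α.orderEmbOfFin rfl)) (⇑(α.orderEmbOfFin rfl)) := rfl
    rw [hps, minorOn_submatrix A (α.orderEmbOfFin rfl).strictMono s s rfl]
    exact hprin _ (hs.image _)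
  have main : ∀ α : Finset (Fin n), α.Nonempty → ∃ lam : ℝ, 0 < lam ∧
      (psub A α - lam • 1).det = 0 ∧
      (∀ t : ℝ, (psub A α - t • 1).det = 0 → lam ≤ t) ∧
      (∀ (r : Fin α.card) (t : ℝ), (psub A α - t • 1).adjugate r r = 0 → lam < t) := by
    intro α hα
    have hcard1 : 0 < α.card := Finset.card_pos.2 hα
    obtain ⟨ε, hε, h2⟩ : ∃ ε : Fin α.card → ℝ, (∀ i, ε i = 1 ∨ ε i = -1) ∧
        ∀ i j, 0 < ε i * ε j * (psub A α).adjugate i j := by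
      rcases eq_or_lt_of_le (Nat.one_le_iff_ne_zero.2 hcard1.ne') with heq | h2le
      · refine ⟨fun _ => 1, fun _ => Or.inl rfl, ?_⟩
        intro i j
        haveI : Subsingleton (Fin α.card) := by
          rw [← heq]; infer_instance
        have hij : i = j := Subsingleton.elim i j
        have hadj1 : (psub A α).adjugate = 1 := Matrix.adjugate_subsingleton _
        rw [hadj1, hij]
        simp [Matrix.one_apply_eq]
      · exact adjsign h2le (psub A α) (hcomp α h2le).choose_spec
    exact taumain hcard1 (psub A α) (h1p α) ε hε h2
  choose lam hlam0 hlamroot hlammin hlamsub using main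
  have hlval : ∀ (α : Finset (Fin n)) (hα : α.Nonempty),
      lval (psub A α) = ((lam α hα : ℝ) : EReal) :=
    fun α hα => lval_eq _ _ (hlamroot α hα) (hlammin α hα)
  have hstep : ∀ (α : Finset (Fin n)) (hα : α.Nonempty) (x : Fin n), x ∈ α →
      ∀ (hβ : (α.erase x).Nonempty), lam α hα < lam (α.erase x) hβ := by
    intro α hα x hxα hβ
    obtain ⟨r, hr⟩ : ∃ r : Fin α.card, (α.orderEmbOfFin rfl) r = x := by
      have hxi : x ∈ Finset.image (⇑(α.orderEmbOfFin rfl)) Finset.univ := by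
        rw [orderEmbOfFin_image]; exact hxα
      obtain ⟨r, -, hr⟩ := Finset.mem_image.1 hxi
      exact ⟨r, hr⟩
    refine hlamsub α hα r (lam (α.erase x) hβ) ?_
    set t := lam (α.erase x) hβ with ht
    have h1' : psub A α - t • 1 = psub (A - t • 1) α := psub_sub_smul_one A α t
    have h2' : psub A (α.erase x) - t • 1 = psub (A - t • 1) (α.erase x) :=
      psub_sub_smul_one A (α.erase x) t
    rw [h1', adj_psub_diag (A - t • 1) α r, hr, minorOn_self, ← h2']
    exact hlamroot (α.erase x) hβ
  have hchain : ∀ (d : ℕ) (α β : Finset (Fin n)) (hβ : β.Nonempty), β ⊆ α →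
      α.card = β.card + d → 1 ≤ d → ∀ (hα : α.Nonempty),
      lam α hα < lam β hβ := by
    intro d
    induction d with
    | zero => intro α β hβ hss hcd hd hα; omega
    | succ d ih =>
      intro α β hβ hss hcd _ hα
      obtain ⟨x, hxα, hxβ⟩ : ∃ x, x ∈ α ∧ x ∉ β := by
        by_contra hno
        push_neg at hno
        have hba : α ⊆ β := hno
        have := Finset.card_le_card hba
        omega
      have hsse : β ⊆ α.erase x := Finset.subset_erase.2 ⟨hss, hxβ⟩
      have hecard : (α.erase x).card = α.card - 1 := Finset.card_erase_of_mem hxα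
      have hne' : (α.erase x).Nonempty := hβ.mono hsse
      rcases Nat.eq_zero_or_pos d with rfl | hd1
      · have hβcard : β.card = (α.erase x).card := by omega
        have hbe : β = α.erase x :=
          Finset.eq_of_subset_of_card_le hsse (le_of_eq hβcard.symm)
        subst hbe
        exact hstep α hα x hxα _
      · calc lam α hα < lam (α.erase x) hne' := hstep α hα x hxα hne'
          _ < lam β hβ := ih (α.erase x) β hβ hsse (by omega) hd1 hne'
  refine ⟨?_, ?_, ?_⟩
  · rcases Nat.eq_zero_or_pos n with rfl | hn
    · have hempty : {t : ℝ | A.charpoly.IsRoot t} = ∅ := by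
        ext t
        simp only [Set.mem_setOf_eq, Set.mem_empty_iff_false, iff_false]
        intro h
        have hd1 : (A - t • 1).det = 1 := Matrix.det_isEmpty
        rw [charroot A t] at h
        rw [h] at hd1
        norm_num at hd1
      rw [lval, hempty]
      rw [Set.image_empty]
      rw [insert_empty_eq, sInf_singleton]
      calc (0 : EReal) = ((0:ℝ) : EReal) := by norm_num
        _ < ⊤ := EReal.coe_lt_top _
    · have hu : (Finset.univ : Finset (Fin n)).Nonempty := ⟨⟨0, hn⟩, Finset.mem_univ _⟩
      have hbij : Function.Bijective ⇑((Finset.univ : Finset (Fin n)).orderEmbOfFin rfl) := by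
        rw [Fintype.bijective_iff_injective_and_card]
        exact ⟨(Finset.univ.orderEmbOfFin rfl).injective, by simp⟩
      have hch : (psub A Finset.univ).charpoly = A.charpoly := by
        set eqv := Equiv.ofBijective _ hbij with heqv
        have hre : psub A Finset.univ = Matrix.reindex eqv.symm eqv.symm A := rfl
        rw [hre, Matrix.charpoly_reindex]
      have hlv : lval A = lval (psub A Finset.univ) := by
        rw [lval, lval, hch]
      rw [hlv, hlval Finset.univ hu]
      exact_mod_cast hlam0 Finset.univ hu
  · intro α hα
    rw [hlval α hα]
    exact EReal.coe_lt_top _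
  · intro α β hβ hss
    have hα : α.Nonempty := hβ.mono hss.subset
    have hcardlt := Finset.card_lt_card hss
    have hcs := Finset.card_le_card hss.subset
    have h := hchain (α.card - β.card) α β hβ hss.subset (by omega) (by omega) hα
    rw [hlval α hα, hlval β hβ]
    constructor
    · exact_mod_cast h
    · exact EReal.coe_lt_top _
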